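/- Let X ⊆ ℝⁿ be nonempty, closed and convex, f, c : ℝⁿ → ℝ continuous, and H(y; x) = max{f(y) − τ_f(x), c(y)} with τ_f(x) = f(x) + ρ[c(x)]₊ and ρ ≥ 0. If x̄ ∈ X is a local solution of the problem: minimize f(x) over x ∈ X subject to c(x) ≤ 0, then x̄ is a local minimizer of the function y ↦ H(y; x̄) over X. -/
import Mathlib

/-- If `x̄ ∈ X` is a local solution of `min f over X s.t. c ≤ 0`, then `x̄` is a local
minimizer of the improvement function `y ↦ H(y; x̄)` over `X`. -/
theorem stmt_2 {n : ℕ} (X : Set (EuclideanSpace ℝ (Fin n)))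
    (hXne : X.Nonempty) (hXclosed : IsClosed X) (hXconv : Convex ℝ X)
    (f c : EuclideanSpace ℝ (Fin n) → ℝ) (hf : Continuous f) (hc : Continuous c)
    (ρ : ℝ) (hρ : 0 ≤ ρ)
    (xbar : EuclideanSpace ℝ (Fin n)) (hxbarX : xbar ∈ X) (hxbarfeas : c xbar ≤ 0)
    (hlocal : ∃ U ∈ nhds xbar, ∀ x ∈ X ∩ U, c x ≤ 0 → f xbar ≤ f x) :
    ∃ V ∈ nhds xbar, ∀ y ∈ X ∩ V,
      max (f xbar - (f xbar + ρ * max (c xbar) 0)) (c xbar)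
        ≤ max (f y - (f xbar + ρ * max (c xbar) 0)) (c y) := by
  obtain ⟨U, hU, hUopt⟩ := hlocal
  refine ⟨U, hU, fun y hy => ?_⟩
  have hm : max (c xbar) 0 = 0 := max_eq_right hxbarfeas
  rw [hm]
  have hL : max (f xbar - (f xbar + ρ * 0)) (c xbar) = 0 := by
    rw [mul_zero, add_zero, sub_self]
    exact max_eq_left hxbarfeas
  rw [hL]
  rcases le_or_gt (c y) 0 with h | h
  · have := hUopt y hy h
    refine le_max_of_le_left ?_
    rw [mul_zero, add_zero]
    linarith
  · exact le_max_of_le_right h.le
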